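/- For Z1, Z2, Z3 ∈ ℂ with Re(Zj) < -1/2 for j = 1,2,3, the complex number Z4 := (-Z1 - Z2 - Z3 - 2Z1Z2 - 2Z1Z3 - 2Z2Z3)/(1 + 2Z1 + 2Z2 + 2Z3) is well-defined (the denominator is nonzero) and satisfies Re(Z4) > -1/2. -/

import Mathlib

set_option maxHeartbeats 1000000 in

theorem stmt_15 (Z1 Z2 Z3 : ℂ) (h1 : Z1.re < -1/2) (h2 : Z2.re < -1/2) (h3 : Z3.re < -1/2) :
    1 + 2*Z1 + 2*Z2 + 2*Z3 ≠ 0 ∧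
    ((-Z1 - Z2 - Z3 - 2*Z1*Z2 - 2*Z1*Z3 - 2*Z2*Z3) / (1 + 2*Z1 + 2*Z2 + 2*Z3)).re > -1/2 := by
  set x1 := Z1.re; set y1 := Z1.im
  set x2 := Z2.re; set y2 := Z2.im
  set x3 := Z3.re; set y3 := Z3.im
  have hDre : (1 + 2*Z1 + 2*Z2 + 2*Z3).re = 1 + 2*x1 + 2*x2 + 2*x3 := by simp; rfl
  have hDne : (1 + 2*Z1 + 2*Z2 + 2*Z3) ≠ 0 := by
    intro h
    have := congrArg Complex.re h
    rw [hDre] at this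
    simp at this
    linarith
  refine ⟨hDne, ?_⟩
  have hn : 0 < Complex.normSq (1 + 2*Z1 + 2*Z2 + 2*Z3) := by
    exact Complex.normSq_pos.mpr hDne
  rw [gt_iff_lt, Complex.div_re, ← add_div, lt_div_iff₀ hn]
  have hu1 : 0 < -(1 + 2*x1) := by linarith
  have hu2 : 0 < -(1 + 2*x2) := by linarith
  have hu3 : 0 < -(1 + 2*x3) := by linarith
  simp only [Complex.normSq_apply, Complex.add_re, Complex.add_im, Complex.sub_re,
    Complex.sub_im, Complex.mul_re, Complex.mul_im, Complex.neg_re, Complex.neg_im,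
    Complex.one_re, Complex.one_im, Complex.re_ofNat, Complex.im_ofNat]
  ring_nf
  nlinarith [sq_nonneg (y1+y2+y3), sq_nonneg y1, sq_nonneg y2, sq_nonneg y3,
    mul_pos hu1 hu2, mul_pos hu1 hu3, mul_pos hu2 hu3,
    mul_pos (mul_pos hu1 hu2) hu3,
    mul_nonneg hu1.le (by nlinarith [sq_nonneg (2*y2+y3), sq_nonneg y3] : (0:ℝ) ≤ y2^2+y2*y3+y3^2),
    mul_nonneg hu2.le (by nlinarith [sq_nonneg (2*y1+y3), sq_nonneg y3] : (0:ℝ) ≤ y1^2+y1*y3+y3^2),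
    mul_nonneg hu3.le (by nlinarith [sq_nonneg (2*y1+y2), sq_nonneg y2] : (0:ℝ) ≤ y1^2+y1*y2+y2^2),
    mul_pos hu1 hu1, mul_pos hu2 hu2, mul_pos hu3 hu3]
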